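/- Let B be a p × k matrix with orthonormal columns and Σ a symmetric PSD p × p matrix with eigenvalues λ₁ ≥ … ≥ λ_p. Then tr(BᵀΣB) ≤ λ₁ + … + λ_k, with equality when the columns of B are eigenvectors of Σ corresponding to the top k eigenvalues (Ky Fan's maximum principle). -/

import Mathlib

lemma kyfan_card {p k : ℕ} (hk : k ≤ p) :
    (Finset.univ.filter (fun m : Fin p => (m : ℕ) < k)) =
      Finset.map ⟨Fin.castLE hk, Fin.castLE_injective hk⟩ Finset.univ := by
  ext m
  simp only [Finset.mem_filter, Finset.mem_univ, true_and, Finset.mem_map,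
    Function.Embedding.coeFn_mk]
  constructor
  · intro h; exact ⟨⟨m, h⟩, rfl⟩
  · rintro ⟨j, rfl⟩; exact j.isLt

lemma kyfan_comb {p k : ℕ} (hk : k ≤ p) (lam : Fin p → ℝ) (hmono : Antitone lam)
    (d : Fin p → ℝ) (hd0 : ∀ i, 0 ≤ d i) (hd1 : ∀ i, d i ≤ 1)
    (hsum : ∑ i, d i = k) :
    ∑ i, lam i * d i ≤ ∑ m ∈ Finset.univ.filter (fun m : Fin p => (m : ℕ) < k), lam m := by
  rcases Nat.eq_zero_or_pos k with hk0 | hk0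
  · subst hk0
    have hz : ∀ i ∈ (Finset.univ : Finset (Fin p)), d i = 0 := by
      rw [← Finset.sum_eq_zero_iff_of_nonneg (fun i _ => hd0 i)]
      simpa using hsum
    simp only [Nat.not_lt_zero, Finset.filter_false, Finset.sum_empty]
    have : ∑ i, lam i * d i = 0 := Finset.sum_eq_zero (fun i hi => by rw [hz i hi, mul_zero])
    linarith
  · set t := lam ⟨k - 1, by omega⟩ with ht
    set A := Finset.univ.filter (fun m : Fin p => (m : ℕ) < k) with hA
    have hcard : A.card = k := by rw [hA, kyfan_card hk]; simp
    have hsplit : ∑ i, lam i * d i =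
        ∑ i ∈ A, lam i * d i + ∑ i ∈ Finset.univ.filter (fun m : Fin p => ¬ (m:ℕ) < k), lam i * d i := by
      rw [hA, Finset.sum_filter_add_sum_filter_not]
    have hdsplit : ∑ i ∈ A, d i + ∑ i ∈ Finset.univ.filter (fun m : Fin p => ¬ (m:ℕ) < k), d i = k := by
      rw [hA, Finset.sum_filter_add_sum_filter_not]; exact hsum
    have h1 : ∑ i ∈ A, lam i * d i ≤ ∑ i ∈ A, (lam i - t * (1 - d i)) := by
      apply Finset.sum_le_sum
      intro i hi
      have hik : (i : ℕ) < k := by rw [hA] at hi; simpa using hi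
      have hlt : t ≤ lam i := hmono (by simp [Fin.le_def]; omega)
      nlinarith [hd1 i, hd0 i]
    have h2 : ∑ i ∈ Finset.univ.filter (fun m : Fin p => ¬ (m:ℕ) < k), lam i * d i ≤
        ∑ i ∈ Finset.univ.filter (fun m : Fin p => ¬ (m:ℕ) < k), t * d i := by
      apply Finset.sum_le_sum
      intro i hi
      have hik : ¬ (i : ℕ) < k := by simpa using hi
      have hlt : lam i ≤ t := hmono (by simp [Fin.le_def]; omega)
      nlinarith [hd0 i]
    have hexp : ∑ i ∈ A, (lam i - t * (1 - d i)) = ∑ i ∈ A, lam i - t * (k - ∑ i ∈ A, d i) := by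
      rw [Finset.sum_sub_distrib, ← Finset.mul_sum]
      congr 1
      rw [Finset.sum_sub_distrib]
      simp [hcard]
    rw [hsplit]
    calc ∑ i ∈ A, lam i * d i + ∑ i ∈ Finset.univ.filter (fun m : Fin p => ¬ (m:ℕ) < k), lam i * d i
        ≤ (∑ i ∈ A, lam i - t * ((k:ℝ) - ∑ i ∈ A, d i)) + ∑ i ∈ Finset.univ.filter (fun m : Fin p => ¬ (m:ℕ) < k), t * d i := by
          rw [← hexp]; exact add_le_add h1 h2
      _ = ∑ i ∈ A, lam i := by rw [← Finset.mul_sum]; linear_combination t * hdsplit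

/-- Ky Fan's maximum principle: for `B` a `p × k` matrix with orthonormal columns and `Σ`
symmetric PSD with eigenvalues `λ₁ ≥ … ≥ λ_p` (orthonormal eigenvectors `β`),
`tr(BᵀΣB) ≤ λ₁ + … + λ_k`, with equality when the columns of `B` are the top-`k`
eigenvectors. -/
theorem stmt_18 {p k : ℕ} (hk : k ≤ p)
    (S : Matrix (Fin p) (Fin p) ℝ) (hsymm : S.IsSymm) (hpsd : S.PosSemidef)
    (β : Fin p → Fin p → ℝ) (lam : Fin p → ℝ)
    (horth : ∀ i j, dotProduct (β i) (β j) = if i = j then (1 : ℝ) else 0)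
    (heig : ∀ i, S.mulVec (β i) = lam i • β i)
    (hmono : Antitone lam) :
    (∀ B : Matrix (Fin p) (Fin k) ℝ, B.transpose * B = 1 →
        (B.transpose * S * B).trace ≤
          ∑ m ∈ Finset.univ.filter (fun m : Fin p => (m : ℕ) < k), lam m) ∧
    ((Matrix.of fun i (j : Fin k) => β (Fin.castLE hk j) i).transpose * S *
        (Matrix.of fun i (j : Fin k) => β (Fin.castLE hk j) i)).trace =
      ∑ m ∈ Finset.univ.filter (fun m : Fin p => (m : ℕ) < k), lam m := by
  set Q : Matrix (Fin p) (Fin p) ℝ := Matrix.of β with hQ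
  have hQQt : Q * Q.transpose = 1 := by
    ext i j
    simpa [hQ, Matrix.mul_apply, Matrix.one_apply, dotProduct] using horth i j
  have hQtQ : Q.transpose * Q = 1 := mul_eq_one_comm.mp hQQt
  have hSQ : S * Q.transpose = Q.transpose * Matrix.diagonal lam := by
    ext i j
    have h := congrFun (heig j) i
    simp only [Matrix.mulVec, dotProduct, Pi.smul_apply, smul_eq_mul] at h
    simp only [Matrix.mul_apply, Matrix.transpose_apply, hQ, Matrix.of_apply]
    rw [h, Finset.sum_eq_single j]
    · simp [Matrix.diagonal_apply_eq]; ring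
    · intro b _ hb; rw [Matrix.diagonal_apply_ne _ hb, mul_zero]
    · simp
  have hS : S = Q.transpose * Matrix.diagonal lam * Q := by
    calc S = S * (Q.transpose * Q) := by rw [hQtQ, Matrix.mul_one]
      _ = (S * Q.transpose) * Q := by rw [Matrix.mul_assoc]
      _ = Q.transpose * Matrix.diagonal lam * Q := by rw [hSQ]
  constructor
  · intro B hB
    obtain ⟨C, hC⟩ : ∃ C : Matrix (Fin p) (Fin k) ℝ, C = Q * B := ⟨_, rfl⟩
    have hCtC : C.transpose * C = 1 := by
      rw [hC, Matrix.transpose_mul]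
      calc B.transpose * Q.transpose * (Q * B)
          = B.transpose * (Q.transpose * Q) * B := by
            rw [Matrix.mul_assoc, Matrix.mul_assoc, Matrix.mul_assoc]
        _ = B.transpose * B := by rw [hQtQ, Matrix.mul_one]
        _ = 1 := hB
    obtain ⟨P, hP⟩ : ∃ P : Matrix (Fin p) (Fin p) ℝ, P = C * C.transpose := ⟨_, rfl⟩
    have hPsymm : P.transpose = P := by
      rw [hP, Matrix.transpose_mul, Matrix.transpose_transpose]
    have hPP : P * P = P := by
      have haux : C * C.transpose * C = C := by
        rw [Matrix.mul_assoc, hCtC, Matrix.mul_one]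
      rw [hP, ← Matrix.mul_assoc, haux]
    have hPsq : ∀ i, P i i = ∑ j, (P i j) ^ 2 := by
      intro i
      conv_lhs => rw [← hPP]
      rw [Matrix.mul_apply]
      refine Finset.sum_congr rfl fun j _ => ?_
      rw [← congrFun (congrFun hPsymm j) i]
      simp [sq]
    have hd0 : ∀ i, 0 ≤ P i i := fun i => by
      rw [hPsq i]; exact Finset.sum_nonneg fun j _ => sq_nonneg (P i j)
    have hd1 : ∀ i, P i i ≤ 1 := by
      intro i
      have h1 : (P i i) ^ 2 ≤ P i i := by
        conv_rhs => rw [hPsq i]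
        exact Finset.single_le_sum (f := fun j => (P i j) ^ 2) (fun j _ => sq_nonneg (P i j)) (Finset.mem_univ i)
      nlinarith [hd0 i]
    have hsum : ∑ i, P i i = k := by
      have : P.trace = (C.transpose * C).trace := by
        rw [hP]; exact Matrix.trace_mul_comm C C.transpose
      rw [hCtC, Matrix.trace_one] at this
      simpa [Matrix.trace, Matrix.diag] using this
    have htr : (B.transpose * S * B).trace = ∑ i, lam i * P i i := by
      have h1 : B.transpose * S * B = C.transpose * Matrix.diagonal lam * C := by
        rw [hS, hC, Matrix.transpose_mul]
        simp only [Matrix.mul_assoc]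
      rw [h1, Matrix.mul_assoc, Matrix.trace_mul_comm, Matrix.mul_assoc, ← hP]
      simp [Matrix.trace, Matrix.diag, Matrix.diagonal_mul]
    rw [htr]
    exact kyfan_comb hk lam hmono (fun i => P i i) hd0 hd1 hsum
  · -- equality part
    set B0 : Matrix (Fin p) (Fin k) ℝ := Matrix.of fun i (j : Fin k) => β (Fin.castLE hk j) i with hB0
    have hentry : ∀ j : Fin k, (B0.transpose * S * B0) j j = lam (Fin.castLE hk j) := by
      intro j
      have hcol : ∀ a, (S * B0) a j = lam (Fin.castLE hk j) * β (Fin.castLE hk j) a := by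
        intro a
        have h := congrFun (heig (Fin.castLE hk j)) a
        simp only [Matrix.mulVec, dotProduct, Pi.smul_apply, smul_eq_mul] at h
        simp only [Matrix.mul_apply, hB0, Matrix.of_apply]
        exact h
      rw [Matrix.mul_assoc, Matrix.mul_apply]
      have : ∀ a, B0.transpose j a * (S * B0) a j
          = lam (Fin.castLE hk j) * (β (Fin.castLE hk j) a * β (Fin.castLE hk j) a) := by
        intro a
        rw [hcol a]
        simp only [Matrix.transpose_apply, hB0, Matrix.of_apply]
        ring
      rw [Finset.sum_congr rfl fun a _ => this a, ← Finset.mul_sum]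
      have := horth (Fin.castLE hk j) (Fin.castLE hk j)
      simp only [dotProduct, if_pos rfl] at this
      rw [this]; simp
    have htr : (B0.transpose * S * B0).trace = ∑ j : Fin k, lam (Fin.castLE hk j) := by
      simp [Matrix.trace, Matrix.diag, hentry]
    rw [htr, kyfan_card hk, Finset.sum_map]
    rfl
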